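/- Let E be a real Banach space, N a positive integer, and u : E → ℝ → E a function. Suppose x : {0,1,…,N} → E is a sequential DDIM trajectory, i.e. x_n = x_{n+1} − (1/N)·u(x_{n+1}, (n+1)/N) for every n with 0 ≤ n < N, and suppose y : {0,1,…,N} → E is a Picard fixed point, i.e. y_n = y_N − (1/N)·∑_{i=n+1}^{N} u(y_i, i/N) for every n with 0 ≤ n ≤ N. If x_N = y_N, then x_n = y_n for every n with 0 ≤ n ≤ N. -/

import Mathlib

/-- **Proposition 1 (SDO paper).** If `x` is a sequential DDIM trajectory and `y` is a
Picard fixed point for the same step count `N` and velocity function `u`, and the initial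
noises agree (`x N = y N`), then the whole trajectories agree. -/
theorem ddim_eq_picard_fixed_point
    {E : Type*} [NormedAddCommGroup E] [NormedSpace ℝ E] [CompleteSpace E]
    (N : ℕ) (hN : 0 < N) (u : E → ℝ → E) (x y : ℕ → E)
    (hx : ∀ n, n < N →
      x n = x (n + 1) - (1 / (N : ℝ)) • u (x (n + 1)) (((n : ℝ) + 1) / N))
    (hy : ∀ n, n ≤ N →
      y n = y N - (1 / (N : ℝ)) • ∑ i ∈ Finset.Icc (n + 1) N, u (y i) ((i : ℝ) / N))
    (hinit : x N = y N) :
    ∀ n, n ≤ N → x n = y n := by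
  -- one-step recursion for y
  have hy1 : ∀ n, n < N →
      y n = y (n + 1) - (1 / (N : ℝ)) • u (y (n + 1)) (((n : ℝ) + 1) / N) := by
    intro n hn
    have hs : Finset.Icc (n + 1) N = insert (n + 1) (Finset.Icc (n + 2) N) := by
      ext i
      simp only [Finset.mem_Icc, Finset.mem_insert]
      omega
    have h1 := hy n hn.le
    have h2 := hy (n + 1) hn
    rw [hs, Finset.sum_insert (by simp)] at h1
    rw [h1, h2, smul_add]
    push_cast
    abel
  -- downward induction
  have key : ∀ k, k ≤ N → x (N - k) = y (N - k) := by
    intro k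
    induction k with
    | zero => simpa using hinit
    | succ k ih =>
      intro hk
      have hk' : k ≤ N := by omega
      have hlt : N - (k + 1) < N := by omega
      have hsucc : N - (k + 1) + 1 = N - k := by omega
      have := ih hk'
      rw [hx _ hlt, hy1 _ hlt, hsucc, this]
  intro n hn
  have : n = N - (N - n) := by omega
  rw [this]
  exact key _ (by omega)
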